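/- Let B, B' : Fin m → Fin m → ℝ be antisymmetric, each simple (B i j = u i * v j − v i * u j and B' i j = u' i * v' j − v' i * u' j for some vectors u,v,u',v'), and suppose the full antisymmetrization over all four indices of (i,j,k,l) ↦ B i j * B' k l vanishes for all i,j,k,l. For any a, b, c : Fin m → ℝ define the vector w by w i = Σ_{j,k,l} Alt₃ʲᵏˡ((j,k,l) ↦ B i j * B' k l)(j,k,l) * a j * b k * c l. Then for all i, j, k, the full antisymmetrization over (i,j,k) of B i j * w k vanishes (w is a common factor direction: B_{[ij}w_{k]} = 0). -/

import Mathlib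

open Finset

/-- Full antisymmetrization of a 4-index expression over all four index slots. -/
noncomputable def alt4 {m : ℕ} (T : Fin m → Fin m → Fin m → Fin m → ℝ)
    (i j k l : Fin m) : ℝ :=
  (1 / 24 : ℝ) * ∑ σ : Equiv.Perm (Fin 4),
    ((Equiv.Perm.sign σ : ℤ) : ℝ) *
      T (![i, j, k, l] (σ 0)) (![i, j, k, l] (σ 1)) (![i, j, k, l] (σ 2)) (![i, j, k, l] (σ 3))

/-- Antisymmetrization of a 3-index expression over its three index slots. -/
noncomputable def alt3 {m : ℕ} (T : Fin m → Fin m → Fin m → ℝ)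
    (i j k : Fin m) : ℝ :=
  (1 / 6 : ℝ) * ∑ σ : Equiv.Perm (Fin 3),
    ((Equiv.Perm.sign σ : ℤ) : ℝ) *
      T (![i, j, k] (σ 0)) (![i, j, k] (σ 1)) (![i, j, k] (σ 2))

lemma sum_perm3 (f : Equiv.Perm (Fin 3) → ℝ) :
    ∑ σ : Equiv.Perm (Fin 3), f σ =
      f 1 + f (Equiv.swap 0 1) + f (Equiv.swap 0 2) + f (Equiv.swap 1 2) +
      f (Equiv.swap 0 1 * Equiv.swap 1 2) + f (Equiv.swap 0 2 * Equiv.swap 1 2) := by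
  have h : (univ : Finset (Equiv.Perm (Fin 3))) =
      {1, Equiv.swap 0 1, Equiv.swap 0 2, Equiv.swap 1 2,
       Equiv.swap 0 1 * Equiv.swap 1 2, Equiv.swap 0 2 * Equiv.swap 1 2} := by decide
  rw [h, Finset.sum_insert (by decide), Finset.sum_insert (by decide),
      Finset.sum_insert (by decide), Finset.sum_insert (by decide),
      Finset.sum_insert (by decide), Finset.sum_singleton]
  ring

lemma alt3_explicit {m : ℕ} (T : Fin m → Fin m → Fin m → ℝ) (i j k : Fin m) :
    alt3 T i j k = (1/6 : ℝ) *
      (T i j k - T j i k - T k j i - T i k j + T j k i + T k i j) := by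
  rw [alt3, sum_perm3]
  norm_num [Equiv.Perm.sign_swap, Equiv.swap_apply_def, Fin.ext_iff, mul_comm]
  simp only [show ![i, j, k] 2 = k from rfl]
  ring

/-- For simple antisymmetric bivectors `B`, `B'` satisfying the Plucker condition
`B_{[ij}B'_{kl]} = 0`, the vector `w_i = B_{i[j}B'_{kl]} a^j b^k c^l` is a common factor
direction: `B_{[ij}w_{k]} = 0`. -/
theorem common_factor_direction (m : ℕ) (B B' : Fin m → Fin m → ℝ)
    (hB : ∀ i j, B i j = - B j i) (hB' : ∀ i j, B' i j = - B' j i)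
    (hBs : ∃ u v : Fin m → ℝ, ∀ i j, B i j = u i * v j - v i * u j)
    (hB's : ∃ u v : Fin m → ℝ, ∀ i j, B' i j = u i * v j - v i * u j)
    (hpl : ∀ i j k l, alt4 (fun i j k l => B i j * B' k l) i j k l = 0)
    (a b c : Fin m → ℝ) (w : Fin m → ℝ)
    (hw : ∀ i, w i =
      ∑ j, ∑ k, ∑ l, alt3 (fun j k l => B i j * B' k l) j k l * a j * b k * c l) :
    ∀ i j k, alt3 (fun i j k => B i j * w k) i j k = 0 := by
  obtain ⟨u, v, hu⟩ := hBs
  have key : ∀ i, w i =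
      u i * (∑ j, ∑ k, ∑ l, alt3 (fun j k l => v j * B' k l) j k l * a j * b k * c l)
    - v i * (∑ j, ∑ k, ∑ l, alt3 (fun j k l => u j * B' k l) j k l * a j * b k * c l) := by
    intro i
    rw [hw i, Finset.mul_sum, Finset.mul_sum, ← Finset.sum_sub_distrib]
    refine Finset.sum_congr rfl fun j _ => ?_
    rw [Finset.mul_sum, Finset.mul_sum, ← Finset.sum_sub_distrib]
    refine Finset.sum_congr rfl fun k _ => ?_
    rw [Finset.mul_sum, Finset.mul_sum, ← Finset.sum_sub_distrib]
    refine Finset.sum_congr rfl fun l _ => ?_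
    rw [alt3_explicit, alt3_explicit, alt3_explicit]
    simp only [hu]
    ring
  intro i j k
  rw [alt3_explicit]
  simp only [key, hu]
  ring
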